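/- The Yaglom limit Q_min of the subcritical branching Markov chain is itself a quasi-stationary distribution with eigenvalue m: its probability generating functional satisfies G_{Q_min}[G[h](·)] − G_{Q_min}[f(0)] = m · G_{Q_min}[h] for all h with 0 < inf h ≤ h ≤ 1. -/

import Mathlib

open MeasureTheory Filter Topology

noncomputable def genFun (p : ℕ → ℝ) (s : ℝ) : ℝ := ∑' j, p j * s ^ j

noncomputable def genFunIter (p : ℕ → ℝ) : ℕ → ℝ → ℝ
  | 0, s => s
  | n + 1, s => genFun p (genFunIter p n s)

/-- Admissible test functions: measurable `h` with `0 < inf h ≤ h ≤ 1`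
(the class 𝒱₀(ℝ)). -/
def Adm (h : ℝ → ℝ) : Prop :=
  Measurable h ∧ (∃ ε > (0 : ℝ), ∀ x, ε ≤ h x) ∧ ∀ x, h x ≤ 1

/-- The "slope" series `D(t) = ∑ p_j (1 + t + ⋯ + t^{j-1})`. -/
noncomputable def Dfn (p : ℕ → ℝ) (t : ℝ) : ℝ :=
  ∑' j, p j * ∑ i ∈ Finset.range j, t ^ i

lemma genFunIter_succ' (p : ℕ → ℝ) : ∀ n s,
    genFunIter p (n + 1) s = genFunIter p n (genFun p s) := by
  intro n
  induction n with
  | zero => intro s; rfl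
  | succ n ih =>
    intro s
    show genFun p (genFunIter p (n + 1) s) = genFun p (genFunIter p n (genFun p s))
    rw [ih]

/-- the Yaglom limit `Q_min` of the subcritical branching Markov chain
is itself a quasi-stationary distribution with eigenvalue `m`: its p.g.fl.
`G_{Q_min}[h] = lim_n (G_n[h](x) - f_n(0))/(1 - f_n(0))` (for every `x`) satisfies
`G_{Q_min}[G[h](·)] - G_{Q_min}[f(0)] = m · G_{Q_min}[h]` for all admissible `h`. -/
theorem stmt16 (p : ℕ → ℝ) (m : ℝ)
    (hp_nonneg : ∀ j, 0 ≤ p j) (hp_sum : ∑' j, p j = 1)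
    (hm : m = ∑' j : ℕ, (j : ℝ) * p j) (hm_pos : 0 < m) (hm_lt : m < 1)
    (hp0 : 0 < p 0)
    (G : ℕ → (ℝ → ℝ) → ℝ → ℝ)
    (hG0 : ∀ h x, G 0 h x = h x)
    (hGsemi : ∀ n h x, G (n + 1) h x = G n (fun y => G 1 h y) x)
    (hGAdm : ∀ n h, Adm h → Adm (G n h))
    (hGconst : ∀ n : ℕ, ∀ s ∈ Set.Icc (0 : ℝ) 1, ∀ x : ℝ,
      G n (fun _ => s) x = genFunIter p n s)
    (GQmin : (ℝ → ℝ) → ℝ)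
    (hYaglom : ∀ h, Adm h → ∀ x : ℝ,
      Tendsto (fun n : ℕ => (G n h x - genFunIter p n 0) / (1 - genFunIter p n 0))
        atTop (𝓝 (GQmin h))) :
    ∀ h, Adm h →
      GQmin (fun x => G 1 h x) - GQmin (fun _ => genFun p 0) = m * GQmin h := by
  intro h hA
  -- basic summability
  have hsum : Summable p := by
    by_contra hs
    rw [tsum_eq_zero_of_not_summable hs] at hp_sum; norm_num at hp_sum
  have hjsum : Summable (fun j : ℕ => (j : ℝ) * p j) := by
    by_contra hs
    rw [tsum_eq_zero_of_not_summable hs] at hm; exact absurd hm.symm (by linarith)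
  -- geometric sums
  have hgeom_nonneg : ∀ (t : ℝ), 0 ≤ t → ∀ j : ℕ,
      (0 : ℝ) ≤ ∑ i ∈ Finset.range j, t ^ i := fun t ht j =>
    Finset.sum_nonneg fun i _ => pow_nonneg ht i
  have hgeom_le : ∀ (t : ℝ), 0 ≤ t → t ≤ 1 → ∀ j : ℕ,
      (∑ i ∈ Finset.range j, t ^ i) ≤ (j : ℝ) := by
    intro t h0 h1 j
    calc (∑ i ∈ Finset.range j, t ^ i) ≤ ∑ i ∈ Finset.range j, (1 : ℝ) :=
          Finset.sum_le_sum fun i _ => pow_le_one₀ h0 h1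
      _ = (j : ℝ) := by simp
  -- summability of the D series and of the generating series
  have hDsummable : ∀ t : ℝ, 0 ≤ t → t ≤ 1 →
      Summable (fun j : ℕ => p j * ∑ i ∈ Finset.range j, t ^ i) := by
    intro t h0 h1
    refine Summable.of_nonneg_of_le (fun j => mul_nonneg (hp_nonneg j) (hgeom_nonneg t h0 j))
      (fun j => ?_) hjsum
    calc p j * ∑ i ∈ Finset.range j, t ^ i ≤ p j * (j : ℝ) :=
          mul_le_mul_of_nonneg_left (hgeom_le t h0 h1 j) (hp_nonneg j)
      _ = (j : ℝ) * p j := mul_comm _ _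
  have hfsummable : ∀ t : ℝ, 0 ≤ t → t ≤ 1 →
      Summable (fun j : ℕ => p j * t ^ j) := by
    intro t h0 h1
    refine Summable.of_nonneg_of_le (fun j => mul_nonneg (hp_nonneg j) (pow_nonneg h0 j))
      (fun j => ?_) hsum
    calc p j * t ^ j ≤ p j * 1 :=
          mul_le_mul_of_nonneg_left (pow_le_one₀ h0 h1) (hp_nonneg j)
      _ = p j := mul_one _
  -- the factorization 1 - f(t) = (1 - t) * D(t)
  have hfactor : ∀ t : ℝ, 0 ≤ t → t ≤ 1 →
      1 - genFun p t = (1 - t) * Dfn p t := by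
    intro t h0 h1
    have hterm : ∀ j : ℕ, p j - p j * t ^ j
        = (1 - t) * (p j * ∑ i ∈ Finset.range j, t ^ i) := by
      intro j
      linear_combination p j * geom_sum_mul t j
    calc 1 - genFun p t = ∑' j, (p j - p j * t ^ j) := by
          rw [genFun, ← hp_sum, Summable.tsum_sub hsum (hfsummable t h0 h1)]
      _ = ∑' j, (1 - t) * (p j * ∑ i ∈ Finset.range j, t ^ i) := by
          exact tsum_congr hterm
      _ = (1 - t) * Dfn p t := by rw [tsum_mul_left]; rfl
  -- bounds on D
  have hD_le_m : ∀ t : ℝ, 0 ≤ t → t ≤ 1 → Dfn p t ≤ m := by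
    intro t h0 h1
    rw [hm]
    refine Summable.tsum_le_tsum (fun j => ?_) (hDsummable t h0 h1) hjsum
    calc p j * ∑ i ∈ Finset.range j, t ^ i ≤ p j * (j : ℝ) :=
          mul_le_mul_of_nonneg_left (hgeom_le t h0 h1 j) (hp_nonneg j)
      _ = (j : ℝ) * p j := mul_comm _ _
  obtain ⟨J, hJ1, hpJ⟩ : ∃ J : ℕ, 1 ≤ J ∧ 0 < p J := by
    by_contra hcon
    push_neg at hcon
    have : ∀ j : ℕ, (j : ℝ) * p j = 0 := by
      intro j
      rcases Nat.eq_zero_or_pos j with hj | hj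
      · simp [hj]
      · have := le_antisymm (hcon j hj) (hp_nonneg j); simp [this]
    rw [hm, tsum_congr this] at hm_pos
    simp at hm_pos
  have hD_pos : ∀ t : ℝ, 0 ≤ t → t ≤ 1 → 0 < Dfn p t := by
    intro t h0 h1
    have hJle : p J * 1 ≤ p J * ∑ i ∈ Finset.range J, t ^ i := by
      refine mul_le_mul_of_nonneg_left ?_ (le_of_lt hpJ)
      calc (1 : ℝ) = t ^ 0 := (pow_zero t).symm
        _ ≤ ∑ i ∈ Finset.range J, t ^ i :=
          Finset.single_le_sum (f := fun i => t ^ i)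
            (fun i _ => pow_nonneg h0 i) (Finset.mem_range.2 hJ1)
    have := Summable.le_tsum (hDsummable t h0 h1) J
      (fun j _ => mul_nonneg (hp_nonneg j) (hgeom_nonneg t h0 j))
    have : p J * 1 ≤ Dfn p t := le_trans hJle this
    nlinarith
  -- f maps [0,1) into [0,1), and t < f t there
  have hf_nonneg : ∀ t : ℝ, 0 ≤ t → 0 ≤ genFun p t := fun t h0 =>
    tsum_nonneg fun j => mul_nonneg (hp_nonneg j) (pow_nonneg h0 j)
  have hf_lt_one : ∀ t : ℝ, 0 ≤ t → t < 1 → genFun p t < 1 := by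
    intro t h0 h1
    have := hfactor t h0 (le_of_lt h1)
    nlinarith [hD_pos t h0 (le_of_lt h1)]
  have hf_gt : ∀ t : ℝ, 0 ≤ t → t < 1 → t < genFun p t := by
    intro t h0 h1
    have hfac := hfactor t h0 (le_of_lt h1)
    have hDle := hD_le_m t h0 (le_of_lt h1)
    nlinarith
  -- the extinction sequence s n = f_n(0)
  have hs_mem : ∀ n : ℕ, 0 ≤ genFunIter p n 0 ∧ genFunIter p n 0 < 1 := by
    intro n
    induction n with
    | zero => norm_num [genFunIter]
    | succ n ih =>
      refine ⟨hf_nonneg _ ih.1, hf_lt_one _ ih.1 ih.2⟩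
  have hs_mono : Monotone (fun n => genFunIter p n 0) := by
    apply monotone_nat_of_le_succ
    intro n
    exact le_of_lt (hf_gt _ (hs_mem n).1 (hs_mem n).2)
  have hs_bdd : BddAbove (Set.range fun n => genFunIter p n 0) := by
    refine ⟨1, ?_⟩
    rintro x ⟨n, rfl⟩
    exact le_of_lt (hs_mem n).2
  have hs_tendsto : Tendsto (fun n => genFunIter p n 0) atTop
      (𝓝 (⨆ n, genFunIter p n 0)) := tendsto_atTop_ciSup hs_mono hs_bdd
  set q : ℝ := ⨆ n, genFunIter p n 0 with hq
  have hq0 : 0 ≤ q := le_ciSup_of_le hs_bdd 0 (hs_mem 0).1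
  have hq1 : q ≤ 1 := ciSup_le fun n => le_of_lt (hs_mem n).2
  -- continuity: f(s n) → f(q)
  have hfq : Tendsto (fun n => genFun p (genFunIter p n 0)) atTop (𝓝 (genFun p q)) := by
    unfold genFun
    refine tendsto_tsum_of_dominated_convergence (f := fun n j => p j * genFunIter p n 0 ^ j)
      (bound := p) hsum (fun j => Tendsto.const_mul _ (hs_tendsto.pow j)) ?_
    filter_upwards with n j
    have h0 := (hs_mem n).1
    have h1 := le_of_lt (hs_mem n).2
    rw [Real.norm_eq_abs, abs_of_nonneg (mul_nonneg (hp_nonneg j) (pow_nonneg h0 j))]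
    calc p j * genFunIter p n 0 ^ j ≤ p j * 1 :=
          mul_le_mul_of_nonneg_left (pow_le_one₀ h0 h1) (hp_nonneg j)
      _ = p j := mul_one _
  have hfix : genFun p q = q := by
    have h2 : Tendsto (fun n => genFunIter p (n + 1) 0) atTop (𝓝 q) :=
      hs_tendsto.comp (tendsto_add_atTop_nat 1)
    have h3 : (fun n => genFunIter p (n + 1) 0)
        = fun n => genFun p (genFunIter p n 0) := rfl
    rw [h3] at h2
    exact tendsto_nhds_unique hfq h2
  have hq_eq : q = 1 := by
    by_contra hne
    have hlt : q < 1 := lt_of_le_of_ne hq1 hne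
    have := hf_gt q hq0 hlt
    rw [hfix] at this
    exact lt_irrefl _ this
  -- convergence of D(s n) to m
  have hDtend : Tendsto (fun n => Dfn p (genFunIter p n 0)) atTop (𝓝 m) := by
    have hq1' : Tendsto (fun n => genFunIter p n 0) atTop (𝓝 1) := by
      rw [← hq_eq]; exact hs_tendsto
    have hmval : m = ∑' j : ℕ, p j * ∑ i ∈ Finset.range j, (1 : ℝ) ^ i := by
      rw [hm]
      refine tsum_congr fun j => ?_
      simp [mul_comm]
    rw [hmval]
    unfold Dfn
    refine tendsto_tsum_of_dominated_convergence
      (f := fun n j => p j * ∑ i ∈ Finset.range j, genFunIter p n 0 ^ i)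
      (bound := fun j => (j : ℝ) * p j) hjsum (fun j => ?_) ?_
    · exact Tendsto.const_mul _ (tendsto_finset_sum _ fun i _ => hq1'.pow i)
    · filter_upwards with n j
      have h0 := (hs_mem n).1
      have h1 := le_of_lt (hs_mem n).2
      rw [Real.norm_eq_abs,
        abs_of_nonneg (mul_nonneg (hp_nonneg j) (hgeom_nonneg _ h0 j))]
      calc p j * ∑ i ∈ Finset.range j, genFunIter p n 0 ^ i ≤ p j * (j : ℝ) :=
            mul_le_mul_of_nonneg_left (hgeom_le _ h0 h1 j) (hp_nonneg j)
        _ = (j : ℝ) * p j := mul_comm _ _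
  -- the constant function p 0
  have hgf0 : genFun p 0 = p 0 := by
    unfold genFun
    rw [tsum_eq_single 0 (fun j hj => by simp [zero_pow hj])]
    simp
  have hp0le1 : p 0 ≤ 1 := by
    have := Summable.le_tsum hsum 0 (fun j _ => hp_nonneg j)
    rwa [hp_sum] at this
  have hAc : Adm (fun _ => genFun p 0) := by
    refine ⟨measurable_const, ⟨genFun p 0, ?_, fun x => le_refl _⟩, fun x => ?_⟩
    · rw [hgf0]; exact hp0
    · rw [hgf0]; exact hp0le1
  -- limit 1 : for G 1 h
  have hA1 : Adm (G 1 h) := hGAdm 1 h hA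
  have L1 : Tendsto (fun n : ℕ =>
      (G (n + 1) h 0 - genFunIter p n 0) / (1 - genFunIter p n 0)) atTop
      (𝓝 (GQmin (fun x => G 1 h x))) := by
    have := hYaglom (fun x => G 1 h x) hA1 0
    refine this.congr fun n => ?_
    rw [hGsemi n h 0]
  -- limit 2 : for the constant function
  have L2 : Tendsto (fun n : ℕ =>
      (genFunIter p (n + 1) 0 - genFunIter p n 0) / (1 - genFunIter p n 0)) atTop
      (𝓝 (GQmin (fun _ => genFun p 0))) := by
    have := hYaglom (fun _ => genFun p 0) hAc 0
    refine this.congr fun n => ?_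
    rw [hGconst n (genFun p 0) ⟨by rw [hgf0]; exact le_of_lt hp0, by rw [hgf0]; exact hp0le1⟩ 0,
      genFunIter_succ']
  -- limit 3 : difference
  have L3 : Tendsto (fun n : ℕ =>
      (G (n + 1) h 0 - genFunIter p (n + 1) 0) / (1 - genFunIter p n 0)) atTop
      (𝓝 (GQmin (fun x => G 1 h x) - GQmin (fun _ => genFun p 0))) := by
    refine (L1.sub L2).congr fun n => ?_
    rw [div_sub_div_same]
    ring_nf
  -- limit 4 : shifted Yaglom limit
  have L4 : Tendsto (fun n : ℕ =>
      (G (n + 1) h 0 - genFunIter p (n + 1) 0) / (1 - genFunIter p (n + 1) 0)) atTop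
      (𝓝 (GQmin h)) := (hYaglom h hA 0).comp (tendsto_add_atTop_nat 1)
  -- limit 5 : product
  have L5 : Tendsto (fun n : ℕ =>
      (G (n + 1) h 0 - genFunIter p (n + 1) 0) / (1 - genFunIter p n 0)) atTop
      (𝓝 (GQmin h * m)) := by
    refine (L4.mul hDtend).congr fun n => ?_
    have h0 := (hs_mem n).1
    have h1 := (hs_mem n).2
    have hfac : 1 - genFunIter p (n + 1) 0
        = (1 - genFunIter p n 0) * Dfn p (genFunIter p n 0) :=
      hfactor _ h0 (le_of_lt h1)
    have hDne : Dfn p (genFunIter p n 0) ≠ 0 :=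
      ne_of_gt (hD_pos _ h0 (le_of_lt h1))
    have hxne : (1 : ℝ) - genFunIter p n 0 ≠ 0 := by linarith
    rw [hfac]
    field_simp
  have := tendsto_nhds_unique L3 L5
  rw [this, mul_comm]
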